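/- arXiv:1304.2860 — 2 statements merged into one kernel-verified Lean document; each statement's English description precedes it below -/
import Mathlib

section
/- Let σ be a 2-stack sortable permutation, w a sorting word for σ, and σ_ℓ ∈ A^{(i)}. Then every element σ_m with m < ℓ and σ_m > σ_ℓ does not move between times t_i and t_{i+1}: in the decorated word of w, no letter λ_{σ_m} or μ_{σ_m} occurs between the letter ρ_{σ_{k_i}} and the letter ρ_{σ_{k_{i+1}}}. -/
/-- The three stack operations: `ρ` (push the next input element onto `H`),
`λ` (move the top of `H` onto the top of `V`), `μ` (pop the top of `V` to the output). -/
inductive Op : Type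
  | push : Op
  | lam : Op
  | mu : Op
  deriving DecidableEq

/-- A full machine configuration: remaining input, stack `H`, stack `V`
(both stacks have their top at the head of the list), and the output so far. -/
structure Conf : Type where
  input : List ℤ
  H : List ℤ
  V : List ℤ
  output : List ℤ
  deriving DecidableEq

/-- One machine step (`none` if the operation is impossible). -/
def stepOp : Op → Conf → Option Conf
  | Op.push, ⟨x :: inp, h, v, out⟩ => some ⟨inp, x :: h, v, out⟩
  | Op.lam, ⟨inp, x :: h, v, out⟩ => some ⟨inp, h, x :: v, out⟩
  | Op.mu, ⟨inp, h, x :: v, out⟩ => some ⟨inp, h, v, out ++ [x]⟩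
  | _, _ => none

/-- Run a word of operations from a configuration. -/
def runOps : List Op → Conf → Option Conf
  | [], c => some c
  | o :: w, c => (stepOp o c).bind (runOps w)

/-- Initial configuration with input `σ`, empty stacks and empty output. -/
def initConf (σ : List ℤ) : Conf := ⟨σ, [], [], []⟩

/-- Number of occurrences of the letter `o` in the word `w`. -/
def countOp (w : List Op) (o : Op) : ℕ := (w.filter (fun o' => decide (o' = o))).length

/-- A stack word: every prefix `v` satisfies `|v|_ρ ≥ |v|_λ ≥ |v|_μ`. -/
def IsStackWord (w : List Op) : Prop :=
  ∀ v : List Op, v <+: w →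
    countOp v Op.mu ≤ countOp v Op.lam ∧ countOp v Op.lam ≤ countOp v Op.push

/-- A sorting word: a stack word with `|w|_ρ = |w|_λ = |w|_μ`. -/
def IsSortingWord (w : List Op) : Prop :=
  IsStackWord w ∧ countOp w Op.push = countOp w Op.lam ∧ countOp w Op.lam = countOp w Op.mu

/-- `w` is a sorting word for `σ`: applied to input `σ` it empties everything
and outputs the elements of `σ` in increasing order. -/
def SortsTo (σ : List ℤ) (w : List Op) : Prop :=
  ∃ out : List ℤ, runOps w (initConf σ) = some ⟨[], [], [], out⟩ ∧
    out.Pairwise (· < ·) ∧ out.Perm σ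

/-- `σ` is 2-stack sortable. -/
def Sortable (σ : List ℤ) : Prop := ∃ w : List Op, SortsTo σ w

/-- A stack configuration `(V, H)`; each list has the top of the stack at its head
(so the bottom-to-top reading is the reverse of the list). -/
structure SConf : Type where
  V : List ℤ
  H : List ℤ
  deriving DecidableEq

/-- The elements of a stack configuration. -/
def SConf.elems (c : SConf) : List ℤ := c.V ++ c.H

/-- A stack configuration is poppable if its elements can all be output in
increasing order using only operations `λ` and `μ`. -/
def Poppable (c : SConf) : Prop :=
  ∃ (w : List Op) (out : List ℤ), Op.push ∉ w ∧
    runOps w ⟨[], c.H, c.V, []⟩ = some ⟨[], [], [], out⟩ ∧ out.Pairwise (· < ·)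

/-- `c` is the stack configuration reached after performing `w` with input `σ`
(i.e. `c = c_σ(w)`). -/
def ReachesConf (σ : List ℤ) (w : List Op) (c : SConf) : Prop :=
  ∃ inp out : List ℤ, runOps w (initConf σ) = some ⟨inp, c.H, c.V, out⟩

/-- A stack configuration is reachable for `σ` if it equals `c_σ(w)` for some stack word `w`. -/
def Reachable (σ : List ℤ) (c : SConf) : Prop :=
  ∃ w : List Op, IsStackWord w ∧ ReachesConf σ w c

/-- A total stack configuration of `σ`: its elements are exactly those of `σ`. -/
def TotalFor (σ : List ℤ) (c : SConf) : Prop := c.elems.Perm σ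

/-- A pushall stack configuration of `σ`: poppable, total and reachable for `σ`. -/
def IsPushall (σ : List ℤ) (c : SConf) : Prop :=
  Poppable c ∧ TotalFor σ c ∧ Reachable σ c

/-- The decorated word of `w` started from a configuration: each letter is labelled
with the element it acts on. -/
def decorate : List Op → Conf → Option (List (Op × ℤ))
  | [], _ => some []
  | Op.push :: w, ⟨x :: inp, h, v, out⟩ =>
      (decorate w ⟨inp, x :: h, v, out⟩).map (fun l => (Op.push, x) :: l)
  | Op.lam :: w, ⟨inp, x :: h, v, out⟩ =>
      (decorate w ⟨inp, h, x :: v, out⟩).map (fun l => (Op.lam, x) :: l)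
  | Op.mu :: w, ⟨inp, h, x :: v, out⟩ =>
      (decorate w ⟨inp, h, v, out ++ [x]⟩).map (fun l => (Op.mu, x) :: l)
  | _ :: _, _ => none

/-- The restriction `w_{|I}` of a decorated word: keep exactly the letters acting
on elements of `I`, then forget the labels. -/
def restrictWord (dw : List (Op × ℤ)) (I : Finset ℤ) : List Op :=
  (dw.filter (fun p => decide (p.2 ∈ I))).map Prod.fst

/-- `Bs` is a decomposition of `τ` into (nonempty, contiguous) blocks whose values
decrease from one block to the next. -/
def IsDecBlocks (τ : List ℤ) (Bs : List (List ℤ)) : Prop :=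
  τ = Bs.flatten ∧ (∀ B ∈ Bs, B ≠ []) ∧
    Bs.Pairwise (fun B B' => ∀ x ∈ B, ∀ y ∈ B', y < x)

/-- `τ` is `⊖`-indecomposable. -/
def MinusIndecomposable (τ : List ℤ) : Prop :=
  τ ≠ [] ∧ ∀ Bs : List (List ℤ), IsDecBlocks τ Bs → Bs.length ≤ 1

/-- `Bs` is the `⊖`-decomposition of `τ`: a decomposition into decreasing blocks,
each of which is `⊖`-indecomposable. -/
def IsMinusDecomposition (τ : List ℤ) (Bs : List (List ℤ)) : Prop :=
  IsDecBlocks τ Bs ∧ ∀ B ∈ Bs, MinusIndecomposable B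

/-- `k` (0-based) is the position of a right-to-left minimum of `σ`:
no later entry is smaller. -/
def IsRTLMinPos (σ : List ℤ) (k : ℕ) : Prop :=
  k < σ.length ∧ ∀ j, j < σ.length → k < j → ¬ (σ.getD j 0 < σ.getD k 0)

instance (σ : List ℤ) : DecidablePred (IsRTLMinPos σ) := fun k => by
  unfold IsRTLMinPos; infer_instance

/-- The (increasing) list of positions of the right-to-left minima of `σ`. -/
def rtlPositions (σ : List ℤ) : List ℕ :=
  (List.range σ.length).filter (fun k => decide (IsRTLMinPos σ k))

/-- The number `r` of right-to-left minima of `σ`. -/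
def rtlCount (σ : List ℤ) : ℕ := (rtlPositions σ).length

/-- The 0-based position `k_i` of the `i`-th right-to-left minimum of `σ` (`i` is 1-based). -/
def rtlPos (σ : List ℤ) (i : ℕ) : ℕ := (rtlPositions σ).getD (i - 1) 0

/-- `σ^{(i)}`: the elements `σ_j` with `j < k_i` and `σ_j > σ_{k_i}`, in the order of `σ`. -/
def sigmaUp (σ : List ℤ) (i : ℕ) : List ℤ :=
  (σ.take (rtlPos σ i)).filter (fun x => decide (σ.getD (rtlPos σ i) 0 < x))

/-- `A^{(i)}`: the elements `σ_j` with `j < k_i` and `σ_j > σ_{k_{i+1}}`, in the order of `σ`. -/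
def commonA (σ : List ℤ) (i : ℕ) : List ℤ :=
  (σ.take (rtlPos σ i)).filter (fun x => decide (σ.getD (rtlPos σ (i + 1)) 0 < x))

/-- The letter `u` occurs (strictly) before the letter `v` in the decorated word `dw`. -/
def Before (dw : List (Op × ℤ)) (u v : Op × ℤ) : Prop :=
  ∃ d1 d2 d3 : List (Op × ℤ), dw = d1 ++ u :: d2 ++ v :: d3

/-- The decorated word `dw` (of a sorting word of `σ`) satisfies property `(P_i)`
(`i` is 1-based). -/
def SatisfiesP (σ : List ℤ) (dw : List (Op × ℤ)) (i : ℕ) : Prop :=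
  (∃ d1 d2 : List (Op × ℤ),
      dw = d1 ++ (Op.push, σ.getD (rtlPos σ i) 0) :: (Op.lam, σ.getD (rtlPos σ i) 0)
        :: (Op.mu, σ.getD (rtlPos σ i) 0) :: d2) ∧
  (∀ x ∈ σ, x < σ.getD (rtlPos σ i) 0 →
      Before dw (Op.mu, x) (Op.push, σ.getD (rtlPos σ i) 0)) ∧
  (i < rtlCount σ →
    ∀ (Bs : List (List ℤ)) (p : ℕ) (m : ℤ),
      IsMinusDecomposition (sigmaUp σ i) Bs →
      m ∈ commonA σ i → (∀ y ∈ commonA σ i, m ≤ y) →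
      p < Bs.length → m ∈ Bs.getD p [] →
      ∀ (x : ℤ) (j : ℕ), p < j → j < Bs.length → x ∈ Bs.getD j [] →
        Before dw (Op.mu, x) (Op.push, σ.getD (rtlPos σ i + 1) 0))

/-- An extended stack configuration `(c, i)` of `σ`: here `i` is the number of input
elements already consumed (the paper's index minus one), `c` is poppable and consists
of all elements among the first `i` ones that are greater than some value `p`. -/
def IsExtConf (σ : List ℤ) (c : SConf) (i : ℕ) : Prop :=
  i ≤ σ.length ∧ Poppable c ∧ c.elems.Nodup ∧
    ∃ p : ℤ, ∀ x : ℤ, x ∈ c.elems ↔ (x ∈ σ.take i ∧ p < x)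

/-- `(c', j)` is accessible from `(c, i)` for `σ`: starting from stacks `c` with input
`σ_{i+1} … σ_n` remaining, some sequence of operations reaches stacks `c'` with input
`σ_{j+1} … σ_n` remaining, the `μ` operations outputting elements in increasing order. -/
def AccessibleFrom (σ : List ℤ) (c : SConf) (i : ℕ) (c' : SConf) (j : ℕ) : Prop :=
  ∃ (w : List Op) (out : List ℤ),
    runOps w ⟨σ.drop i, c.H, c.V, []⟩ = some ⟨σ.drop j, c'.H, c'.V, out⟩ ∧
    out.Pairwise (· < ·)

/-- A `P_i`-stack configuration of `σ`: a configuration `c_{σ_{≤k_i}}(w)` such that for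
some word `u` whose first letter is the push of `σ_{k_i}`, `w ++ u` is a sorting word of
`σ_{≤k_i}` satisfying `(P_ℓ)` for all `ℓ` from 1 to `i`. -/
def PiConfig (σ : List ℤ) (i : ℕ) (c : SConf) : Prop :=
  ∃ (w u : List Op) (dw : List (Op × ℤ)),
    u.head? = some Op.push ∧
    countOp w Op.push = rtlPos σ i ∧
    ReachesConf (σ.take (rtlPos σ i + 1)) w c ∧
    SortsTo (σ.take (rtlPos σ i + 1)) (w ++ u) ∧
    decorate (w ++ u) (initConf (σ.take (rtlPos σ i + 1))) = some dw ∧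
    ∀ l, 1 ≤ l → l ≤ i → SatisfiesP (σ.take (rtlPos σ i + 1)) dw l

/-- The restriction `c_{|I}` of a stack configuration to the elements of `I`. -/
def restrictConf (c : SConf) (I : List ℤ) : SConf :=
  ⟨c.V.filter (fun x => decide (x ∈ I)), c.H.filter (fun x => decide (x ∈ I))⟩

/-- The restriction `σ_{|I}` of a list to the elements of `I`. -/
def restrictList (τ I : List ℤ) : List ℤ := τ.filter (fun x => decide (x ∈ I))

/-- Stack `H` (top at head, i.e. bottom-to-top is the reverse) contains the pattern `132`. -/
def HasPattern132 (H : List ℤ) : Prop :=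
  ∃ x y z : ℤ, List.Sublist [x, y, z] H.reverse ∧ x < z ∧ z < y

/-- Stack `V` contains the pattern `12` (bottom to top). -/
def HasPattern12 (V : List ℤ) : Prop :=
  ∃ x y : ℤ, List.Sublist [x, y] V.reverse ∧ x < y

/-- The stacks `(V,H)` contain the pattern `|2|13|`: an element `i` of `V` and elements
`j, k` of `H`, with `j` below `k` in `H`, such that `j < i < k`. -/
def HasPattern2_13 (c : SConf) : Prop :=
  ∃ i ∈ c.V, ∃ j k : ℤ, List.Sublist [j, k] c.H.reverse ∧ j < i ∧ i < k

/-- `y` occurs (strictly) above `x` in the stack `L` (top of stack at the head). -/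
def AboveIn (L : List ℤ) (y x : ℤ) : Prop :=
  ∃ (a b : ℕ) (ha : a < L.length) (hb : b < L.length),
    a < b ∧ L.get ⟨a, ha⟩ = y ∧ L.get ⟨b, hb⟩ = x

/-- The increasing list of integers `i, i+1, …, j`. -/
def intRange (i j : ℤ) : List ℤ := (List.range (j + 1 - i).toNat).map (fun t => i + t)

/-- The decreasing permutation `n (n-1) … 2 1`. -/
def decPerm (n : ℕ) : List ℤ := (List.range n).map (fun t => (n - t : ℤ))


/-! ### Auxiliary machinery: generic stack traces -/

/-- Generic stack trace semantics: `true` events push, `false` events pop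
(the label of a pop must equal the popped element). -/
def IsTrace : List (Bool × ℤ) → List ℤ → List ℤ → Prop
  | [], s, m => m = s
  | (true, x) :: es, s, m => IsTrace es (x :: s) m
  | (false, x) :: es, s, m => ∃ t, s = x :: t ∧ IsTrace es t m

lemma isTrace_append {a b : List (Bool × ℤ)} {s m : List ℤ} :
    IsTrace (a ++ b) s m ↔ ∃ k, IsTrace a s k ∧ IsTrace b k m := by
  induction a generalizing s with
  | nil => simp [IsTrace]
  | cons e a ih =>
    obtain ⟨bb, x⟩ := e
    cases bb
    · constructor
      · rintro ⟨t, rfl, h⟩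
        obtain ⟨k, h1, h2⟩ := ih.1 h
        exact ⟨k, ⟨t, rfl, h1⟩, h2⟩
      · rintro ⟨k, ⟨t, rfl, h1⟩, h2⟩
        exact ⟨t, rfl, ih.2 ⟨k, h1, h2⟩⟩
    · constructor
      · intro h
        exact ih.1 h
      · rintro ⟨k, h1, h2⟩
        exact ih.2 ⟨k, h1, h2⟩

/-- Elements of the final stack come from the initial stack or from pushes. -/
lemma trace_mem {es : List (Bool × ℤ)} {s m : List ℤ} (h : IsTrace es s m) :
    ∀ x ∈ m, x ∈ s ∨ (true, x) ∈ es := by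
  induction es generalizing s with
  | nil => cases h; intro x hx; exact Or.inl hx
  | cons e es ih =>
    obtain ⟨bb, y⟩ := e
    cases bb
    · obtain ⟨t, rfl, h⟩ := h
      intro x hx
      rcases ih h x hx with hh | hh
      · exact Or.inl (List.mem_cons_of_mem _ hh)
      · exact Or.inr (List.mem_cons_of_mem _ hh)
    · intro x hx
      rcases ih h x hx with hh | hh
      · rcases List.mem_cons.1 hh with rfl | hh
        · exact Or.inr (List.mem_cons_self)
        · exact Or.inl hh
      · exact Or.inr (List.mem_cons_of_mem _ hh)

/-- An element present (initially or pushed) and never popped stays in the stack. -/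
lemma trace_stay {es : List (Bool × ℤ)} {s m : List ℤ} {x : ℤ} (h : IsTrace es s m)
    (hnp : (false, x) ∉ es) (hx : x ∈ s ∨ (true, x) ∈ es) : x ∈ m := by
  induction es generalizing s with
  | nil => cases h; simpa using hx
  | cons e es ih =>
    obtain ⟨bb, y⟩ := e
    cases bb
    · obtain ⟨t, rfl, h⟩ := h
      have hxy : x ≠ y := fun hh => hnp (by simp [hh])
      apply ih h (fun hh => hnp (List.mem_cons_of_mem _ hh))
      rcases hx with hx | hx
      · exact Or.inl ((List.mem_cons.1 hx).resolve_left hxy)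
      · rcases List.mem_cons.1 hx with hh | hh
        · exact absurd hh (by simp [hxy])
        · exact Or.inr hh
    · apply ih h (fun hh => hnp (List.mem_cons_of_mem _ hh))
      rcases hx with hx | hx
      · exact Or.inl (List.mem_cons_of_mem _ hx)
      · rcases List.mem_cons.1 hx with hh | hh
        · injection hh with h1 h2
          exact Or.inl (h2 ▸ List.mem_cons_self)
        · exact Or.inr hh

/-- If `y` is in the stack and never popped, the part of the stack from `y` down
is preserved, and everything above `y` at the end was above `y` initially or pushed. -/
lemma trace_below {y : ℤ} : ∀ {es : List (Bool × ℤ)} {u0 s m : List ℤ},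
    IsTrace es (u0 ++ y :: s) m → (false, y) ∉ es →
    ∃ u, m = u ++ y :: s ∧ ∀ z ∈ u, z ∈ u0 ∨ (true, z) ∈ es := by
  intro es
  induction es with
  | nil =>
    intro u0 s m h _
    cases h
    exact ⟨u0, rfl, fun z hz => Or.inl hz⟩
  | cons e es ih =>
    intro u0 s m h hnp
    obtain ⟨bb, x⟩ := e
    cases bb
    · obtain ⟨t, ht, h⟩ := h
      cases u0 with
      | nil =>
        simp at ht
        exact absurd (by simp [ht.1] : (false, y) ∈ (false, x) :: es) hnp
      | cons a u0 =>
        rw [List.cons_append] at ht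
        injection ht with h1 h2
        subst h1 h2
        obtain ⟨u, rfl, hu⟩ := ih h (fun hh => hnp (List.mem_cons_of_mem _ hh))
        exact ⟨u, rfl, fun z hz => (hu z hz).imp (List.mem_cons_of_mem _)
          (List.mem_cons_of_mem _)⟩
    · have h' : IsTrace es ((x :: u0) ++ y :: s) m := h
      obtain ⟨u, rfl, hu⟩ := ih h' (fun hh => hnp (List.mem_cons_of_mem _ hh))
      refine ⟨u, rfl, fun z hz => ?_⟩
      rcases hu z hz with hh | hh
      · rcases List.mem_cons.1 hh with rfl | hh
        · exact Or.inr (List.mem_cons_self)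
        · exact Or.inl hh
      · exact Or.inr (List.mem_cons_of_mem _ hh)

/-- Crossing lemma: if `x` is pushed in `a` and popped only at the explicit
`(false,x)`, then `y`, pushed after `x`, must be popped in `b` (before `x`'s pop). -/
lemma trace_cross {a b c : List (Bool × ℤ)} {x y : ℤ} {m : List ℤ}
    (h : IsTrace (a ++ (true, y) :: b ++ (false, x) :: c) [] m)
    (hxy : x ≠ y) (hxa : (true, x) ∈ a) (hnfa : (false, x) ∉ a)
    (hntb : (true, x) ∉ b) : (false, y) ∈ b := by
  by_contra hyn
  obtain ⟨k, hab, hc⟩ := isTrace_append.1 h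
  obtain ⟨s1, ha, hb⟩ := isTrace_append.1 hab
  have hxs1 : x ∈ s1 := trace_stay ha hnfa (Or.inr hxa)
  obtain ⟨t, hk, _⟩ := hc
  have hb' : IsTrace b ([] ++ y :: s1) k := hb
  obtain ⟨u, huk, hu⟩ := trace_below hb' hyn
  subst huk
  cases u with
  | nil =>
    rw [List.nil_append] at hk
    injection hk with h1 _
    exact hxy h1.symm
  | cons w u =>
    rw [List.cons_append] at hk
    injection hk with h1 _
    rcases hu w (List.mem_cons_self) with hh | hh
    · simp at hh
    · exact hntb (h1 ▸ hh)

/-- A pop must be preceded by a matching push (when starting from the empty stack). -/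
lemma trace_pop_after_push {p q : List (Bool × ℤ)} {y : ℤ} {m : List ℤ}
    (h : IsTrace (p ++ (false, y) :: q) [] m) : (true, y) ∈ p := by
  obtain ⟨k, hp, hq⟩ := isTrace_append.1 h
  obtain ⟨t, hk, _⟩ := hq
  have : y ∈ k := hk ▸ List.mem_cons_self
  rcases trace_mem hp y this with hh | hh
  · simp at hh
  · exact hh

/-! ### Projections of decorated words -/

/-- Events on stack `H`: pushes `ρ` and pops `λ`. -/
def Hev : List (Op × ℤ) → List (Bool × ℤ)
  | [] => []
  | (Op.push, y) :: d => (true, y) :: Hev d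
  | (Op.lam, y) :: d => (false, y) :: Hev d
  | (Op.mu, _) :: d => Hev d

/-- Events on stack `V`: pushes `λ` and pops `μ`. -/
def Vev : List (Op × ℤ) → List (Bool × ℤ)
  | [] => []
  | (Op.push, _) :: d => Vev d
  | (Op.lam, y) :: d => (true, y) :: Vev d
  | (Op.mu, y) :: d => (false, y) :: Vev d

/-- Labels of `ρ` letters. -/
def pushLbl : List (Op × ℤ) → List ℤ
  | [] => []
  | (Op.push, y) :: d => y :: pushLbl d
  | (Op.lam, _) :: d => pushLbl d
  | (Op.mu, _) :: d => pushLbl d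

/-- Labels of `μ` letters. -/
def muLbl : List (Op × ℤ) → List ℤ
  | [] => []
  | (Op.push, _) :: d => muLbl d
  | (Op.lam, _) :: d => muLbl d
  | (Op.mu, y) :: d => y :: muLbl d

lemma Hev_append (a b : List (Op × ℤ)) : Hev (a ++ b) = Hev a ++ Hev b := by
  induction a with
  | nil => rfl
  | cons p a ih => obtain ⟨o, y⟩ := p; cases o <;> simp [Hev, ih]

lemma Vev_append (a b : List (Op × ℤ)) : Vev (a ++ b) = Vev a ++ Vev b := by
  induction a with
  | nil => rfl
  | cons p a ih => obtain ⟨o, y⟩ := p; cases o <;> simp [Vev, ih]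

lemma pushLbl_append (a b : List (Op × ℤ)) : pushLbl (a ++ b) = pushLbl a ++ pushLbl b := by
  induction a with
  | nil => rfl
  | cons p a ih => obtain ⟨o, y⟩ := p; cases o <;> simp [pushLbl, ih]

lemma muLbl_append (a b : List (Op × ℤ)) : muLbl (a ++ b) = muLbl a ++ muLbl b := by
  induction a with
  | nil => rfl
  | cons p a ih => obtain ⟨o, y⟩ := p; cases o <;> simp [muLbl, ih]

lemma mem_Hev_true {d : List (Op × ℤ)} {y : ℤ} : (true, y) ∈ Hev d ↔ (Op.push, y) ∈ d := by
  induction d with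
  | nil => simp [Hev]
  | cons p d ih => obtain ⟨o, v⟩ := p; cases o <;> simp [Hev, ih]

lemma mem_Hev_false {d : List (Op × ℤ)} {y : ℤ} : (false, y) ∈ Hev d ↔ (Op.lam, y) ∈ d := by
  induction d with
  | nil => simp [Hev]
  | cons p d ih => obtain ⟨o, v⟩ := p; cases o <;> simp [Hev, ih]

lemma mem_Vev_true {d : List (Op × ℤ)} {y : ℤ} : (true, y) ∈ Vev d ↔ (Op.lam, y) ∈ d := by
  induction d with
  | nil => simp [Vev]
  | cons p d ih => obtain ⟨o, v⟩ := p; cases o <;> simp [Vev, ih]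

lemma mem_Vev_false {d : List (Op × ℤ)} {y : ℤ} : (false, y) ∈ Vev d ↔ (Op.mu, y) ∈ d := by
  induction d with
  | nil => simp [Vev]
  | cons p d ih => obtain ⟨o, v⟩ := p; cases o <;> simp [Vev, ih]

lemma mem_pushLbl {d : List (Op × ℤ)} {y : ℤ} : y ∈ pushLbl d ↔ (Op.push, y) ∈ d := by
  induction d with
  | nil => simp [pushLbl]
  | cons p d ih => obtain ⟨o, v⟩ := p; cases o <;> simp [pushLbl, ih]

lemma mem_muLbl {d : List (Op × ℤ)} {y : ℤ} : y ∈ muLbl d ↔ (Op.mu, y) ∈ d := by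
  induction d with
  | nil => simp [muLbl]
  | cons p d ih => obtain ⟨o, v⟩ := p; cases o <;> simp [muLbl, ih]

lemma count_pushLbl (d : List (Op × ℤ)) (y : ℤ) :
    (pushLbl d).count y = d.count (Op.push, y) := by
  induction d with
  | nil => simp [pushLbl]
  | cons p d ih =>
    obtain ⟨o, v⟩ := p
    cases o <;> simp [pushLbl, List.count_cons, ih, Prod.ext_iff]

lemma count_muLbl (d : List (Op × ℤ)) (y : ℤ) :
    (muLbl d).count y = d.count (Op.mu, y) := by
  induction d with
  | nil => simp [muLbl]
  | cons p d ih =>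
    obtain ⟨o, v⟩ := p
    cases o <;> simp [muLbl, List.count_cons, ih, Prod.ext_iff]

lemma count_Hev_false (d : List (Op × ℤ)) (y : ℤ) :
    (Hev d).count (false, y) = d.count (Op.lam, y) := by
  induction d with
  | nil => simp [Hev]
  | cons p d ih =>
    obtain ⟨o, v⟩ := p
    cases o <;> simp [Hev, List.count_cons, ih, Prod.ext_iff]

lemma count_Hev_true (d : List (Op × ℤ)) (y : ℤ) :
    (Hev d).count (true, y) = d.count (Op.push, y) := by
  induction d with
  | nil => simp [Hev]
  | cons p d ih =>
    obtain ⟨o, v⟩ := p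
    cases o <;> simp [Hev, List.count_cons, ih, Prod.ext_iff]

/-- Counting pushes and pops of a given label along a trace. -/
lemma trace_count {es : List (Bool × ℤ)} {s m : List ℤ} (h : IsTrace es s m) (y : ℤ) :
    es.count (true, y) + s.count y = es.count (false, y) + m.count y := by
  induction es generalizing s with
  | nil => cases h; simp
  | cons e es ih =>
    obtain ⟨bb, x⟩ := e
    cases bb
    · obtain ⟨t, rfl, h⟩ := h
      have h2 := ih h
      have e1 : ((false, x) :: es).count (true, y) = es.count (true, y) :=
        List.count_cons_of_ne (by simp)
      rcases eq_or_ne y x with rfl | hyx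
      · have e2 : ((false, y) :: es).count (false, y) = es.count (false, y) + 1 :=
          List.count_cons_self
        have e3 : (y :: t).count y = t.count y + 1 := List.count_cons_self
        rw [e1, e2, e3]; omega
      · have e2 : ((false, x) :: es).count (false, y) = es.count (false, y) :=
          List.count_cons_of_ne (by simp [hyx, Ne.symm hyx])
        have e3 : (x :: t).count y = t.count y := List.count_cons_of_ne (Ne.symm hyx)
        rw [e1, e2, e3]; omega
    · have h2 := ih h
      have e1 : ((true, x) :: es).count (false, y) = es.count (false, y) :=
        List.count_cons_of_ne (by simp)
      rcases eq_or_ne y x with rfl | hyx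
      · have e2 : ((true, y) :: es).count (true, y) = es.count (true, y) + 1 :=
          List.count_cons_self
        have e3 : (y :: s).count y = s.count y + 1 := List.count_cons_self
        rw [e1, e2]
        rw [e3] at h2
        omega
      · have e2 : ((true, x) :: es).count (true, y) = es.count (true, y) :=
          List.count_cons_of_ne (by simp [hyx, Ne.symm hyx])
        have e3 : (x :: s).count y = s.count y := List.count_cons_of_ne (Ne.symm hyx)
        rw [e1, e2]
        rw [e3] at h2
        omega

/-! ### The simulation lemma -/

lemma decorate_spec : ∀ (w : List Op) (c : Conf) (dw : List (Op × ℤ)),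
    decorate w c = some dw →
    ∃ c' : Conf, runOps w c = some c' ∧
      c.input = pushLbl dw ++ c'.input ∧
      IsTrace (Hev dw) c.H c'.H ∧
      IsTrace (Vev dw) c.V c'.V ∧
      c'.output = c.output ++ muLbl dw := by
  intro w
  induction w with
  | nil =>
    intro c dw h
    simp [decorate] at h
    subst h
    exact ⟨c, rfl, by simp [pushLbl], by exact rfl, by exact rfl, by simp [muLbl]⟩
  | cons o w ih =>
    intro c dw h
    obtain ⟨inp, H, V, out⟩ := c
    cases o with
    | push =>
      cases inp with
      | nil => simp [decorate] at h
      | cons x inp =>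
        rw [decorate] at h
        rw [Option.map_eq_some_iff] at h
        obtain ⟨dl, hdl, rfl⟩ := h
        obtain ⟨c', h1, h2, h3, h4, h5⟩ := ih _ _ hdl
        refine ⟨c', ?_, ?_, ?_, ?_, ?_⟩
        · simp [runOps, stepOp, h1]
        · simpa [pushLbl] using h2
        · exact h3
        · exact h4
        · simpa [muLbl] using h5
    | lam =>
      cases H with
      | nil => simp [decorate] at h
      | cons x H =>
        rw [decorate] at h
        rw [Option.map_eq_some_iff] at h
        obtain ⟨dl, hdl, rfl⟩ := h
        obtain ⟨c', h1, h2, h3, h4, h5⟩ := ih _ _ hdl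
        refine ⟨c', ?_, ?_, ?_, ?_, ?_⟩
        · simp [runOps, stepOp, h1]
        · simpa [pushLbl] using h2
        · exact ⟨H, rfl, h3⟩
        · exact h4
        · simpa [muLbl] using h5
    | mu =>
      cases V with
      | nil => simp [decorate] at h
      | cons x V =>
        rw [decorate] at h
        rw [Option.map_eq_some_iff] at h
        obtain ⟨dl, hdl, rfl⟩ := h
        obtain ⟨c', h1, h2, h3, h4, h5⟩ := ih _ _ hdl
        refine ⟨c', ?_, ?_, ?_, ?_, ?_⟩
        · simp [runOps, stepOp, h1]
        · simpa [pushLbl] using h2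
        · exact h3
        · exact ⟨V, rfl, h4⟩
        · rw [h5]; simp [muLbl]

/-! ### Small auxiliary facts -/

lemma prefix_eq_take {L P Q : List ℤ} {a : ℤ} {n : ℕ} (hnd : L.Nodup)
    (hL : L = P ++ a :: Q) (hn : n < L.length) (ha : L.getD n 0 = a) :
    P = L.take n := by
  have hP : P.length < L.length := by rw [hL]; simp
  have h2 : L[P.length]'hP = a := by
    subst hL
    rw [List.getElem_append_right (le_refl P.length)]
    simp
  have h3 : L[n]'hn = a := by rw [← List.getD_eq_getElem L 0 hn]; exact ha
  have h4 : P.length = n := (List.Nodup.getElem_inj_iff hnd).1 (by rw [h2, h3])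
  rw [hL, ← h4, List.take_left]

lemma rtlPos_lt_length {σ : List ℤ} {i : ℕ} (h : i - 1 < rtlCount σ) :
    rtlPos σ i < σ.length := by
  have h1 : rtlPos σ i ∈ rtlPositions σ := by
    unfold rtlPos
    rw [List.getD_eq_getElem _ _ h]
    exact List.getElem_mem _
  unfold rtlPositions at h1
  rw [List.mem_filter] at h1
  exact List.mem_range.1 h1.1

lemma sorted_out_lt {dw X Y : List (Op × ℤ)} {u v : ℤ}
    (hdw : dw = X ++ (Op.mu, v) :: Y) (hu : (Op.mu, u) ∈ X)
    (hsort : (muLbl dw).Pairwise (· < ·)) : u < v := by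
  rw [hdw, muLbl_append] at hsort
  have := (List.pairwise_append.1 hsort).2.2
  exact this u (mem_muLbl.2 hu) v (by simp [muLbl])

/-- If `σ_ℓ ∈ A^{(i)}`, then during a sorting process of `σ` every element `σ_m` with
`m < ℓ` and `σ_m > σ_ℓ` does not move between times `t_i` and `t_{i+1}`: in the
decorated word, no letter `λ_{σ_m}` or `μ_{σ_m}` occurs between `ρ_{σ_{k_i}}` and
`ρ_{σ_{k_{i+1}}}`. -/
theorem no_move_between_rtl_pushes (σ : List ℤ) (hσ : σ.Nodup)
    (w : List Op) (dw : List (Op × ℤ))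
    (hw : SortsTo σ w) (hdw : decorate w (initConf σ) = some dw)
    (i : ℕ) (hi : 1 ≤ i) (hir : i + 1 ≤ rtlCount σ)
    (l : ℕ) (hl : l < rtlPos σ i) (hlA : σ.getD (rtlPos σ (i + 1)) 0 < σ.getD l 0)
    (m : ℕ) (hml : m < l) (hvm : σ.getD l 0 < σ.getD m 0) :
    ∀ d1 d2 d3 : List (Op × ℤ),
      dw = d1 ++ (Op.push, σ.getD (rtlPos σ i) 0) :: d2
              ++ (Op.push, σ.getD (rtlPos σ (i + 1)) 0) :: d3 →
      (Op.lam, σ.getD m 0) ∉ d2 ∧ (Op.mu, σ.getD m 0) ∉ d2 := by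
  classical
  obtain ⟨out, hrun, hsort, hperm⟩ := hw
  obtain ⟨c', hrun', hinp, hHtr0, hVtr0, hout0⟩ := decorate_spec w (initConf σ) dw hdw
  rw [hrun] at hrun'
  have hc' : Conf.mk [] [] [] out = c' := by injection hrun'
  subst hc'
  have hpushL : σ = pushLbl dw := by simpa [initConf] using hinp
  have hHtr : IsTrace (Hev dw) [] [] := hHtr0
  have hVtr : IsTrace (Vev dw) [] [] := hVtr0
  have hout : out = muLbl dw := by simpa [initConf] using hout0
  have hsorted : (muLbl dw).Pairwise (· < ·) := hout ▸ hsort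
  -- index facts
  have hlenpos : i + 1 ≤ (rtlPositions σ).length := hir
  have hki : rtlPos σ i < σ.length := rtlPos_lt_length (by omega)
  have hki1 : rtlPos σ (i + 1) < σ.length := rtlPos_lt_length (by omega)
  have hkine : rtlPos σ i ≠ rtlPos σ (i + 1) := by
    have hnd : (rtlPositions σ).Nodup :=
      List.Nodup.filter _ (List.nodup_range)
    unfold rtlPos
    rw [List.getD_eq_getElem _ _ (show i - 1 < (rtlPositions σ).length by omega),
        List.getD_eq_getElem _ _ (show i + 1 - 1 < (rtlPositions σ).length by omega)]
    intro hh
    have := (List.Nodup.getElem_inj_iff hnd).1 hh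
    omega
  set x := σ.getD m 0 with hxdef
  set z := σ.getD l 0 with hzdef
  set A := σ.getD (rtlPos σ i) 0 with hAdef
  set B := σ.getD (rtlPos σ (i + 1)) 0 with hBdef
  have hmlen : m < σ.length := by omega
  have hllen : l < σ.length := by omega
  have hxσ : x ∈ σ := by
    rw [hxdef, List.getD_eq_getElem _ _ hmlen]; exact List.getElem_mem hmlen
  have hzσ : z ∈ σ := by
    rw [hzdef, List.getD_eq_getElem _ _ hllen]; exact List.getElem_mem hllen
  have hBσ : B ∈ σ := by
    rw [hBdef, List.getD_eq_getElem _ _ hki1]; exact List.getElem_mem hki1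
  have hgetne : ∀ {a b : ℕ}, a < σ.length → b < σ.length → a ≠ b →
      σ.getD a 0 ≠ σ.getD b 0 := by
    intro a b ha hb hab
    rw [List.getD_eq_getElem _ _ ha, List.getD_eq_getElem _ _ hb]
    intro hh
    exact hab ((List.Nodup.getElem_inj_iff hσ).1 hh)
  have hxz : x ≠ z := ne_of_gt hvm
  have hxA : x ≠ A := hgetne hmlen hki (by omega)
  have hzA : z ≠ A := hgetne hllen hki (by omega)
  have hxB : x ≠ B := ne_of_gt (by omega)
  have hzB : z ≠ B := ne_of_gt hlA
  have hBA : B ≠ A := hgetne hki1 hki (Ne.symm hkine)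
  -- counts
  have hcpush : ∀ y, y ∈ σ → dw.count (Op.push, y) = 1 := by
    intro y hy
    rw [← count_pushLbl, ← hpushL]
    exact List.count_eq_one_of_mem hσ hy
  have hcmu : ∀ y, y ∈ σ → dw.count (Op.mu, y) = 1 := by
    intro y hy
    rw [← count_muLbl, ← hout, hperm.count_eq]
    exact List.count_eq_one_of_mem hσ hy
  have hclam : ∀ y, y ∈ σ → dw.count (Op.lam, y) = 1 := by
    intro y hy
    have h0 := trace_count hHtr y
    simp only [List.count_nil, Nat.add_zero] at h0
    rw [count_Hev_true, count_Hev_false] at h0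
    rw [← h0]
    exact hcpush y hy
  intro d1 d2 d3 hdec
  -- (μ, B) occurs in d3
  have hmuB3 : (Op.mu, B) ∈ d3 := by
    have hmem : (Op.mu, B) ∈ dw := by
      rw [← List.count_pos_iff, hcmu B hBσ]; norm_num
    rw [hdec] at hmem
    rcases List.mem_append.1 hmem with hmem | hmem
    · exfalso
      have h1 : (false, B) ∈ Vev (d1 ++ (Op.push, A) :: d2) := mem_Vev_false.2 hmem
      obtain ⟨p, q, hpq⟩ := List.append_of_mem h1
      have hsplit : Vev dw = p ++ (false, B) :: (q ++ Vev ((Op.push, B) :: d3)) := by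
        rw [hdec, Vev_append, hpq]; simp [List.append_assoc]
      have h2 : (true, B) ∈ p := trace_pop_after_push (by rw [← hsplit]; exact hVtr)
      have h3 : (Op.lam, B) ∈ d1 ++ (Op.push, A) :: d2 := by
        rw [← mem_Vev_true, hpq]
        exact List.mem_append_left _ h2
      have h4 : (false, B) ∈ Hev (d1 ++ (Op.push, A) :: d2) := mem_Hev_false.2 h3
      obtain ⟨p2, q2, hpq2⟩ := List.append_of_mem h4
      have hsplit2 : Hev dw = p2 ++ (false, B) :: (q2 ++ Hev ((Op.push, B) :: d3)) := by
        rw [hdec, Hev_append, hpq2]; simp [List.append_assoc]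
      have h5 : (true, B) ∈ p2 := trace_pop_after_push (by rw [← hsplit2]; exact hHtr)
      have h6 : (Op.push, B) ∈ d1 ++ (Op.push, A) :: d2 := by
        rw [← mem_Hev_true, hpq2]
        exact List.mem_append_left _ h5
      have hc := hcpush B hBσ
      rw [hdec, List.count_append, List.count_cons_self] at hc
      have := List.count_pos_iff.2 h6
      omega
    · rcases List.mem_cons.1 hmem with hh | hh
      · exact absurd hh (by simp)
      · exact hh
  constructor
  · -- λ-part
    intro hmem
    obtain ⟨e, f, hd2⟩ := List.append_of_mem hmem
    have hQ : σ = pushLbl d1 ++ A :: (pushLbl d2 ++ B :: pushLbl d3) := by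
      rw [hpushL, hdec]
      simp [pushLbl_append, pushLbl, List.append_assoc]
    have htake1 : pushLbl d1 = σ.take (rtlPos σ i) := prefix_eq_take hσ hQ hki hAdef.symm
    have hlki : l < (σ.take (rtlPos σ i)).length := by rw [List.length_take]; omega
    have hgetDl : (σ.take (rtlPos σ i)).getD l 0 = z := by
      rw [List.getD_eq_getElem _ _ hlki, List.getElem_take, hzdef,
        List.getD_eq_getElem _ _ hllen]
    have hz_take : z ∈ σ.take (rtlPos σ i) := by
      rw [← hgetDl, List.getD_eq_getElem _ _ hlki]
      exact List.getElem_mem hlki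
    have hpz : (Op.push, z) ∈ d1 := mem_pushLbl.1 (htake1 ▸ hz_take)
    obtain ⟨g, h, hd1⟩ := List.append_of_mem hpz
    have htkn : (σ.take (rtlPos σ i)).Nodup := (List.take_sublist _ _).nodup hσ
    have hQ2 : σ.take (rtlPos σ i) = pushLbl g ++ z :: pushLbl h := by
      rw [← htake1, hd1]; simp [pushLbl_append, pushLbl]
    have htakeg : pushLbl g = (σ.take (rtlPos σ i)).take l :=
      prefix_eq_take htkn hQ2 hlki hgetDl
    have htakeg' : pushLbl g = σ.take l := by
      rw [htakeg, List.take_take]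
      congr 1
      omega
    have hmll : m < (σ.take l).length := by rw [List.length_take]; omega
    have hx_take : x ∈ σ.take l := by
      have hgx : (σ.take l)[m]'hmll = x := by
        rw [List.getElem_take, hxdef, List.getD_eq_getElem _ _ hmlen]
      rw [← hgx]
      exact List.getElem_mem hmll
    have hpxg : (Op.push, x) ∈ g := mem_pushLbl.1 (htakeg' ▸ hx_take)
    -- master count equation
    have hcount : ∀ p : Op × ℤ, dw.count p =
        g.count p + h.count p + e.count p + f.count p + d3.count p +
        (if (Op.push, z) = p then 1 else 0) + (if (Op.push, A) = p then 1 else 0) +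
        (if (Op.lam, x) = p then 1 else 0) + (if (Op.push, B) = p then 1 else 0) := by
      intro p
      rw [hdec, hd1, hd2]
      simp [List.count_append, List.count_cons]
      omega
    have hlx0 : (Op.lam, x) ∉ g ∧ (Op.lam, x) ∉ h ∧ (Op.lam, x) ∉ e ∧
        (Op.lam, x) ∉ f ∧ (Op.lam, x) ∉ d3 := by
      have h0 := hcount (Op.lam, x)
      rw [hclam x hxσ] at h0
      simp at h0
      exact ⟨List.count_eq_zero.1 (by omega), List.count_eq_zero.1 (by omega),
        List.count_eq_zero.1 (by omega), List.count_eq_zero.1 (by omega),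
        List.count_eq_zero.1 (by omega)⟩
    obtain ⟨hlxg, hlxh, hlxe, hlxf, hlxd3⟩ := hlx0
    have hpx0 : (Op.push, x) ∉ h ∧ (Op.push, x) ∉ e := by
      have h0 := hcount (Op.push, x)
      rw [hcpush x hxσ] at h0
      simp [hxz, Ne.symm hxz, hxA, Ne.symm hxA, hxB, Ne.symm hxB] at h0
      have h1 : 0 < g.count (Op.push, x) := List.count_pos_iff.2 hpxg
      exact ⟨List.count_eq_zero.1 (by omega), List.count_eq_zero.1 (by omega)⟩
    obtain ⟨hpxh, hpxe⟩ := hpx0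
    -- first crossing: λ_z occurs before λ_x
    have hHshape : Hev dw = (Hev g ++ (true, z) :: (Hev h ++ (true, A) :: Hev e)) ++
        (false, x) :: Hev (f ++ (Op.push, B) :: d3) := by
      rw [hdec, hd1, hd2]
      simp [Hev_append, Hev, List.append_assoc]
    have hcross1 : (false, z) ∈ Hev h ++ (true, A) :: Hev e := by
      refine trace_cross (a := Hev g) (by rw [← hHshape]; exact hHtr) hxz
        (mem_Hev_true.2 hpxg) (fun hh => hlxg (mem_Hev_false.1 hh)) ?_
      intro hh
      rcases List.mem_append.1 hh with hh | hh
      · exact hpxh (mem_Hev_true.1 hh)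
      · rcases List.mem_cons.1 hh with hh | hh
        · exact hxA (by simpa using hh)
        · exact hpxe (mem_Hev_true.1 hh)
    have hlamz : (Op.lam, z) ∈ h ∨ (Op.lam, z) ∈ e := by
      rcases List.mem_append.1 hcross1 with hh | hh
      · exact Or.inl (mem_Hev_false.1 hh)
      · rcases List.mem_cons.1 hh with hh | hh
        · exact absurd hh (by simp)
        · exact Or.inr (mem_Hev_false.1 hh)
    -- μ_z occurs in d3
    have hmuz3 : (Op.mu, z) ∈ d3 := by
      have hmemz : (Op.mu, z) ∈ dw := by
        rw [← List.count_pos_iff, hcmu z hzσ]; norm_num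
      rw [hdec] at hmemz
      rcases List.mem_append.1 hmemz with hmemz | hmemz
      · exfalso
        obtain ⟨r1, r2, hr⟩ := List.append_of_mem hmuB3
        have hshape2 : dw = ((d1 ++ (Op.push, A) :: d2) ++ (Op.push, B) :: r1) ++
            (Op.mu, B) :: r2 := by
          rw [hdec, hr]; simp [List.append_assoc]
        have := sorted_out_lt hshape2 (List.mem_append_left _ hmemz) hsorted
        omega
      · rcases List.mem_cons.1 hmemz with hh | hh
        · exact absurd hh (by simp)
        · exact hh
    obtain ⟨s1, s2, hd3⟩ := List.append_of_mem hmuz3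
    -- (μ,z) and (λ,z) localization
    have hmz0 : (Op.mu, z) ∉ g ∧ (Op.mu, z) ∉ h ∧ (Op.mu, z) ∉ e ∧ (Op.mu, z) ∉ f ∧
        (Op.mu, z) ∉ s1 ∧ (Op.mu, z) ∉ s2 := by
      have h0 := hcount (Op.mu, z)
      rw [hcmu z hzσ, hd3, List.count_append, List.count_cons_self] at h0
      simp at h0
      exact ⟨List.count_eq_zero.1 (by omega), List.count_eq_zero.1 (by omega),
        List.count_eq_zero.1 (by omega), List.count_eq_zero.1 (by omega),
        List.count_eq_zero.1 (by omega), List.count_eq_zero.1 (by omega)⟩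
    obtain ⟨hmzg, hmzh, hmze, hmzf, hmzs1, hmzs2⟩ := hmz0
    have hlz1 : (Op.lam, z) ∉ f ∧ (Op.lam, z) ∉ d3 ∧
        (h.count (Op.lam, z) + e.count (Op.lam, z) = 1) := by
      have h0 := hcount (Op.lam, z)
      rw [hclam z hzσ] at h0
      simp [hxz, Ne.symm hxz] at h0
      have h1 : 0 < h.count (Op.lam, z) + e.count (Op.lam, z) := by
        rcases hlamz with hh | hh
        · have := List.count_pos_iff.2 hh; omega
        · have := List.count_pos_iff.2 hh; omega
      exact ⟨List.count_eq_zero.1 (by omega), List.count_eq_zero.1 (by omega), by omega⟩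
    obtain ⟨hlzf, hlzd3, _⟩ := hlz1
    have hlzs1 : (Op.lam, z) ∉ s1 := fun hh => hlzd3 (hd3 ▸ List.mem_append_left _ hh)
    -- the common final contradiction
    have key : ∀ α β : List (Op × ℤ),
        dw = ((α ++ (Op.lam, z) :: β) ++ (Op.lam, x) :: (f ++ (Op.push, B) :: s1)) ++
          (Op.mu, z) :: s2 →
        (Op.mu, z) ∉ α → (Op.mu, z) ∉ β → (Op.lam, z) ∉ β → False := by
      intro α β hshape hmza hmzb hlzb
      have hVshape : Vev dw = ((Vev α ++ (true, z) :: Vev β) ++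
          (true, x) :: Vev (f ++ (Op.push, B) :: s1)) ++ (false, z) :: Vev s2 := by
        rw [hshape]
        simp [Vev_append, Vev, List.append_assoc]
      have hcross2 : (false, x) ∈ Vev (f ++ (Op.push, B) :: s1) := by
        refine trace_cross (by rw [← hVshape]; exact hVtr) (Ne.symm hxz)
          (List.mem_append_right _ (List.mem_cons_self)) ?_ ?_
        · intro hh
          rcases List.mem_append.1 hh with hh | hh
          · exact hmza (mem_Vev_false.1 hh)
          · rcases List.mem_cons.1 hh with hh | hh
            · exact absurd hh (by simp)
            · exact hmzb (mem_Vev_false.1 hh)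
        · intro hh
          have hh2 := mem_Vev_true.1 hh
          rcases List.mem_append.1 hh2 with hh2 | hh2
          · exact hlzf hh2
          · rcases List.mem_cons.1 hh2 with hh2 | hh2
            · exact absurd hh2 (by simp)
            · exact hlzs1 hh2
      have hmux : (Op.mu, x) ∈ f ++ (Op.push, B) :: s1 := mem_Vev_false.1 hcross2
      have hlt : x < z := by
        refine sorted_out_lt hshape ?_ hsorted
        exact List.mem_append_right _ (List.mem_cons_of_mem _ hmux)
      omega
    rcases hlamz with hlz | hlz
    · obtain ⟨h1, h2, hh⟩ := List.append_of_mem hlz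
      refine key (g ++ (Op.push, z) :: h1) (h2 ++ (Op.push, A) :: e) ?_ ?_ ?_ ?_
      · rw [hdec, hd1, hd2, hh, hd3]
        simp [List.append_assoc]
      · intro hm
        rcases List.mem_append.1 hm with hm | hm
        · exact hmzg hm
        · rcases List.mem_cons.1 hm with hm | hm
          · exact absurd hm (by simp)
          · exact hmzh (hh ▸ List.mem_append_left _ hm)
      · intro hm
        rcases List.mem_append.1 hm with hm | hm
        · exact hmzh (hh ▸ List.mem_append_right _ (List.mem_cons_of_mem _ hm))
        · rcases List.mem_cons.1 hm with hm | hm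
          · exact absurd hm (by simp)
          · exact hmze hm
      · intro hm
        have hcl : h.count (Op.lam, z) = h1.count (Op.lam, z) + h2.count (Op.lam, z) + 1 := by
          rw [hh, List.count_append, List.count_cons_self]
          omega
        have h0 := hcount (Op.lam, z)
        rw [hclam z hzσ, hcl] at h0
        simp [hxz, Ne.symm hxz] at h0
        rcases List.mem_append.1 hm with hm | hm
        · have := List.count_pos_iff.2 hm
          omega
        · rcases List.mem_cons.1 hm with hm | hm
          · exact absurd hm (by simp)
          · have := List.count_pos_iff.2 hm
            omega
    · obtain ⟨e1, e2, he⟩ := List.append_of_mem hlz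
      refine key (d1 ++ (Op.push, A) :: e1) e2 ?_ ?_ ?_ ?_
      · rw [hdec, hd2, he, hd3]
        simp [List.append_assoc]
      · intro hm
        rcases List.mem_append.1 hm with hm | hm
        · rw [hd1] at hm
          rcases List.mem_append.1 hm with hm | hm
          · exact hmzg hm
          · rcases List.mem_cons.1 hm with hm | hm
            · exact absurd hm (by simp)
            · exact hmzh hm
        · rcases List.mem_cons.1 hm with hm | hm
          · exact absurd hm (by simp)
          · exact hmze (he ▸ List.mem_append_left _ hm)
      · intro hm
        exact hmze (he ▸ List.mem_append_right _ (List.mem_cons_of_mem _ hm))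
      · intro hm
        have hcl : e.count (Op.lam, z) = e1.count (Op.lam, z) + e2.count (Op.lam, z) + 1 := by
          rw [he, List.count_append, List.count_cons_self]
          omega
        have h0 := hcount (Op.lam, z)
        rw [hclam z hzσ, hcl] at h0
        simp [hxz, Ne.symm hxz] at h0
        have := List.count_pos_iff.2 hm
        omega
  · -- μ-part
    intro hmem
    obtain ⟨r1, r2, hr⟩ := List.append_of_mem hmuB3
    have hshape : dw = ((d1 ++ (Op.push, A) :: d2) ++ (Op.push, B) :: r1) ++
        (Op.mu, B) :: r2 := by
      rw [hdec, hr]; simp [List.append_assoc]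
    have hlt : x < B := by
      refine sorted_out_lt hshape ?_ hsorted
      exact List.mem_append_left _
        (List.mem_append_right _ (List.mem_cons_of_mem _ hmem))
    omega
end

section
/- The set of P_1-stack configurations of a permutation σ is exactly the set of pushall stack configurations of σ^{(1)}. -/
section Aux

theorem runOps_append (w₁ w₂ : List Op) (c : Conf) :
    runOps (w₁ ++ w₂) c = (runOps w₁ c).bind (runOps w₂) := by
  induction w₁ generalizing c with
  | nil => simp [runOps]
  | cons o w ih =>
    simp only [List.cons_append, runOps]
    cases stepOp o c with
    | none => simp
    | some c' => simp [ih]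

theorem countOp_cons (o o' : Op) (w : List Op) :
    countOp (o' :: w) o = (if o' = o then 1 else 0) + countOp w o := by
  simp [countOp, List.filter]
  by_cases h : o' = o <;> simp [h] <;> omega

theorem countOp_append (w₁ w₂ : List Op) (o : Op) :
    countOp (w₁ ++ w₂) o = countOp w₁ o + countOp w₂ o := by
  simp [countOp]

theorem runOps_counts {w : List Op} {i h v o i' h' v' o' : List ℤ}
    (hrun : runOps w ⟨i, h, v, o⟩ = some ⟨i', h', v', o'⟩) :
    i.length = i'.length + countOp w Op.push ∧
    h'.length + countOp w Op.lam = h.length + countOp w Op.push ∧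
    v'.length + countOp w Op.mu = v.length + countOp w Op.lam ∧
    o'.length = o.length + countOp w Op.mu := by
  induction w generalizing i h v o with
  | nil =>
    simp only [runOps, Option.some_inj, Conf.mk.injEq] at hrun
    obtain ⟨rfl, rfl, rfl, rfl⟩ := hrun
    simp [countOp]
  | cons op w ih =>
    cases op with
    | push =>
      cases i with
      | nil => simp [runOps, stepOp] at hrun
      | cons x i =>
        simp only [runOps, stepOp, Option.bind_eq_bind, Option.bind_some] at hrun
        have := ih hrun
        simp [countOp_cons, List.length_cons] at *
        omega
    | lam =>
      cases h with
      | nil => simp [runOps, stepOp] at hrun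
      | cons x h =>
        simp only [runOps, stepOp, Option.bind_eq_bind, Option.bind_some] at hrun
        have := ih hrun
        simp [countOp_cons, List.length_cons] at *
        omega
    | mu =>
      cases v with
      | nil => simp [runOps, stepOp] at hrun
      | cons x v =>
        simp only [runOps, stepOp, Option.bind_eq_bind, Option.bind_some] at hrun
        have := ih hrun
        simp [countOp_cons, List.length_cons, List.length_append] at *
        omega

theorem runOps_input {w : List Op} {i h v o i' h' v' o' : List ℤ}
    (hrun : runOps w ⟨i, h, v, o⟩ = some ⟨i', h', v', o'⟩) :
    ∃ d : List ℤ, i = d ++ i' ∧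
      ∀ e : List ℤ, runOps w ⟨d ++ e, h, v, o⟩ = some ⟨e, h', v', o'⟩ := by
  induction w generalizing i h v o with
  | nil =>
    simp only [runOps, Option.some_inj, Conf.mk.injEq] at hrun
    obtain ⟨rfl, rfl, rfl, rfl⟩ := hrun
    exact ⟨[], by simp, fun e => by simp [runOps]⟩
  | cons op w ih =>
    cases op with
    | push =>
      cases i with
      | nil => simp [runOps, stepOp] at hrun
      | cons x i =>
        simp only [runOps, stepOp, Option.bind_eq_bind, Option.bind_some] at hrun
        obtain ⟨d, rfl, hd⟩ := ih hrun
        exact ⟨x :: d, rfl, fun e => by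
          simpa [runOps, stepOp] using hd e⟩
    | lam =>
      cases h with
      | nil => simp [runOps, stepOp] at hrun
      | cons x h =>
        simp only [runOps, stepOp, Option.bind_eq_bind, Option.bind_some] at hrun
        obtain ⟨d, rfl, hd⟩ := ih hrun
        exact ⟨d, rfl, fun e => by simpa [runOps, stepOp] using hd e⟩
    | mu =>
      cases v with
      | nil => simp [runOps, stepOp] at hrun
      | cons x v =>
        simp only [runOps, stepOp, Option.bind_eq_bind, Option.bind_some] at hrun
        obtain ⟨d, rfl, hd⟩ := ih hrun
        exact ⟨d, rfl, fun e => by simpa [runOps, stepOp] using hd e⟩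

theorem runOps_perm {w : List Op} {i h v o i' h' v' o' : List ℤ}
    (hrun : runOps w ⟨i, h, v, o⟩ = some ⟨i', h', v', o'⟩) :
    (o' ++ v' ++ h' ++ i').Perm (o ++ v ++ h ++ i) := by
  induction w generalizing i h v o with
  | nil =>
    simp only [runOps, Option.some_inj, Conf.mk.injEq] at hrun
    obtain ⟨rfl, rfl, rfl, rfl⟩ := hrun
    exact List.Perm.refl _
  | cons op w ih =>
    cases op with
    | push =>
      cases i with
      | nil => simp [runOps, stepOp] at hrun
      | cons x i =>
        simp only [runOps, stepOp, Option.bind_eq_bind, Option.bind_some] at hrun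
        refine (ih hrun).trans ?_
        simp only [List.append_assoc, List.cons_append, List.nil_append]
        exact List.Perm.append_left _ (List.Perm.append_left _
          (List.perm_middle (a := x) (l₁ := h) (l₂ := i)).symm)
    | lam =>
      cases h with
      | nil => simp [runOps, stepOp] at hrun
      | cons x h =>
        simp only [runOps, stepOp, Option.bind_eq_bind, Option.bind_some] at hrun
        refine (ih hrun).trans ?_
        simp only [List.append_assoc, List.cons_append, List.nil_append]
        exact List.Perm.append_left _
          (List.perm_middle (a := x) (l₁ := v) (l₂ := h ++ i)).symm
    | mu =>
      cases v with
      | nil => simp [runOps, stepOp] at hrun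
      | cons x v =>
        simp only [runOps, stepOp, Option.bind_eq_bind, Option.bind_some] at hrun
        have heq : (o ++ [x]) ++ v ++ h ++ i = o ++ (x :: v) ++ h ++ i := by
          simp
        rw [← heq]
        exact ih hrun

theorem runOps_output {w : List Op} {i h v o i' h' v' o' : List ℤ}
    (hrun : runOps w ⟨i, h, v, o⟩ = some ⟨i', h', v', o'⟩) :
    ∃ o₂ : List ℤ, o' = o ++ o₂ ∧
      ∀ pre : List ℤ, runOps w ⟨i, h, v, pre⟩ = some ⟨i', h', v', pre ++ o₂⟩ := by
  induction w generalizing i h v o with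
  | nil =>
    simp only [runOps, Option.some_inj, Conf.mk.injEq] at hrun
    obtain ⟨rfl, rfl, rfl, rfl⟩ := hrun
    exact ⟨[], by simp, fun pre => by simp [runOps]⟩
  | cons op w ih =>
    cases op with
    | push =>
      cases i with
      | nil => simp [runOps, stepOp] at hrun
      | cons x i =>
        simp only [runOps, stepOp, Option.bind_eq_bind, Option.bind_some] at hrun
        obtain ⟨o₂, rfl, ho⟩ := ih hrun
        exact ⟨o₂, rfl, fun pre => by simpa [runOps, stepOp] using ho pre⟩
    | lam =>
      cases h with
      | nil => simp [runOps, stepOp] at hrun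
      | cons x h =>
        simp only [runOps, stepOp, Option.bind_eq_bind, Option.bind_some] at hrun
        obtain ⟨o₂, rfl, ho⟩ := ih hrun
        exact ⟨o₂, rfl, fun pre => by simpa [runOps, stepOp] using ho pre⟩
    | mu =>
      cases v with
      | nil => simp [runOps, stepOp] at hrun
      | cons x v =>
        simp only [runOps, stepOp, Option.bind_eq_bind, Option.bind_some] at hrun
        obtain ⟨o₂, ho₂, ho⟩ := ih hrun
        refine ⟨x :: o₂, by simp [ho₂], fun pre => ?_⟩
        have := ho (pre ++ [x])
        simpa [runOps, stepOp, List.append_assoc] using this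

theorem runOps_no_push {w : List Op} {h v o : List ℤ} {c' : Conf}
    (hrun : runOps w ⟨[], h, v, o⟩ = some c') :
    Op.push ∉ w ∧ c'.input = [] := by
  induction w generalizing h v o with
  | nil =>
    simp only [runOps, Option.some_inj] at hrun
    subst hrun; simp
  | cons op w ih =>
    cases op with
    | push => simp [runOps, stepOp] at hrun
    | lam =>
      cases h with
      | nil => simp [runOps, stepOp] at hrun
      | cons x h =>
        simp only [runOps, stepOp, Option.bind_eq_bind, Option.bind_some] at hrun
        have := ih hrun
        simp_all
    | mu =>
      cases v with
      | nil => simp [runOps, stepOp] at hrun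
      | cons x v =>
        simp only [runOps, stepOp, Option.bind_eq_bind, Option.bind_some] at hrun
        have := ih hrun
        simp_all

theorem isStackWord_of_runOps {w : List Op} {σ : List ℤ} {c' : Conf}
    (hrun : runOps w (initConf σ) = some c') : IsStackWord w := by
  intro p hp
  obtain ⟨rest, rfl⟩ := hp
  rw [runOps_append] at hrun
  cases hmid : runOps p (initConf σ) with
  | none => rw [hmid] at hrun; simp at hrun
  | some mid =>
    obtain ⟨i', h', v', o'⟩ := mid
    have := runOps_counts (w := p) (i := σ) (h := []) (v := []) (o := []) hmid
    simp at this
    omega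

theorem decorate_of_runOps {w : List Op} {c : Conf} {c' : Conf}
    (hrun : runOps w c = some c') :
    ∃ d : List (Op × ℤ), decorate w c = some d ∧ d.map Prod.fst = w := by
  induction w generalizing c with
  | nil => exact ⟨[], rfl, rfl⟩
  | cons op w ih =>
    obtain ⟨i, h, v, o⟩ := c
    cases op with
    | push =>
      cases i with
      | nil => simp [runOps, stepOp] at hrun
      | cons x i =>
        simp only [runOps, stepOp, Option.bind_eq_bind, Option.bind_some] at hrun
        obtain ⟨d, hd, hmap⟩ := ih hrun
        exact ⟨(Op.push, x) :: d, by simp [decorate, hd], by simp [hmap]⟩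
    | lam =>
      cases h with
      | nil => simp [runOps, stepOp] at hrun
      | cons x h =>
        simp only [runOps, stepOp, Option.bind_eq_bind, Option.bind_some] at hrun
        obtain ⟨d, hd, hmap⟩ := ih hrun
        exact ⟨(Op.lam, x) :: d, by simp [decorate, hd], by simp [hmap]⟩
    | mu =>
      cases v with
      | nil => simp [runOps, stepOp] at hrun
      | cons x v =>
        simp only [runOps, stepOp, Option.bind_eq_bind, Option.bind_some] at hrun
        obtain ⟨d, hd, hmap⟩ := ih hrun
        exact ⟨(Op.mu, x) :: d, by simp [decorate, hd], by simp [hmap]⟩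

theorem decorate_append {w₁ w₂ : List Op} {c c' : Conf} {d₁ : List (Op × ℤ)}
    (hrun : runOps w₁ c = some c') (hdec : decorate w₁ c = some d₁) :
    decorate (w₁ ++ w₂) c = (decorate w₂ c').map (d₁ ++ ·) := by
  induction w₁ generalizing c d₁ with
  | nil =>
    simp only [runOps, Option.some_inj] at hrun
    simp only [decorate, Option.some_inj] at hdec
    subst hrun; subst hdec
    simp
  | cons op w ih =>
    obtain ⟨i, h, v, o⟩ := c
    cases op with
    | push =>
      cases i with
      | nil => simp [runOps, stepOp] at hrun
      | cons x i =>
        simp only [runOps, stepOp, Option.bind_eq_bind, Option.bind_some] at hrun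
        simp only [decorate] at hdec
        cases hd : decorate w ⟨i, x :: h, v, o⟩ with
        | none => rw [hd] at hdec; simp at hdec
        | some d =>
          rw [hd] at hdec
          simp only [Option.map_some, Option.some_inj] at hdec
          subst hdec
          have := ih hrun hd
          rw [List.cons_append, decorate, this]
          cases decorate w₂ c' <;> simp
    | lam =>
      cases h with
      | nil => simp [runOps, stepOp] at hrun
      | cons x h =>
        simp only [runOps, stepOp, Option.bind_eq_bind, Option.bind_some] at hrun
        simp only [decorate] at hdec
        cases hd : decorate w ⟨i, h, x :: v, o⟩ with
        | none => rw [hd] at hdec; simp at hdec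
        | some d =>
          rw [hd] at hdec
          simp only [Option.map_some, Option.some_inj] at hdec
          subst hdec
          have := ih hrun hd
          rw [List.cons_append, decorate, this]
          cases decorate w₂ c' <;> simp
    | mu =>
      cases v with
      | nil => simp [runOps, stepOp] at hrun
      | cons x v =>
        simp only [runOps, stepOp, Option.bind_eq_bind, Option.bind_some] at hrun
        simp only [decorate] at hdec
        cases hd : decorate w ⟨i, h, v, o ++ [x]⟩ with
        | none => rw [hd] at hdec; simp at hdec
        | some d =>
          rw [hd] at hdec
          simp only [Option.map_some, Option.some_inj] at hdec
          subst hdec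
          have := ih hrun hd
          rw [List.cons_append, decorate, this]
          cases decorate w₂ c' <;> simp

/-- The sequence of values pushed, as recorded in a decorated word. -/
def pushProj (d : List (Op × ℤ)) : List ℤ :=
  (d.filter (fun p => p.1 = Op.push)).map Prod.snd

theorem decorate_pushProj {w : List Op} {i h v o : List ℤ} {d : List (Op × ℤ)}
    (hdec : decorate w ⟨i, h, v, o⟩ = some d) :
    pushProj d = i.take (countOp w Op.push) := by
  induction w generalizing i h v o d with
  | nil =>
    simp only [decorate, Option.some_inj] at hdec
    subst hdec
    simp [pushProj, countOp]
  | cons op w ih =>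
    cases op with
    | push =>
      cases i with
      | nil => simp [decorate] at hdec
      | cons x i =>
        simp only [decorate] at hdec
        cases hd : decorate w ⟨i, x :: h, v, o⟩ with
        | none => rw [hd] at hdec; simp at hdec
        | some d' =>
          rw [hd] at hdec
          simp only [Option.map_some, Option.some_inj] at hdec
          subst hdec
          simp [pushProj, countOp_cons, List.filter] at *
          rw [Nat.add_comm, List.take_succ_cons]
          simp [ih hd]
    | lam =>
      cases h with
      | nil => simp [decorate] at hdec
      | cons x h =>
        simp only [decorate] at hdec
        cases hd : decorate w ⟨i, h, x :: v, o⟩ with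
        | none => rw [hd] at hdec; simp at hdec
        | some d' =>
          rw [hd] at hdec
          simp only [Option.map_some, Option.some_inj] at hdec
          subst hdec
          have := ih hd
          simp [pushProj, countOp_cons, List.filter] at this ⊢
          exact this
    | mu =>
      cases v with
      | nil => simp [decorate] at hdec
      | cons x v =>
        simp only [decorate] at hdec
        cases hd : decorate w ⟨i, h, v, o ++ [x]⟩ with
        | none => rw [hd] at hdec; simp at hdec
        | some d' =>
          rw [hd] at hdec
          simp only [Option.map_some, Option.some_inj] at hdec
          subst hdec
          have := ih hd
          simp [pushProj, countOp_cons, List.filter] at this ⊢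
          exact this

theorem pushProj_append (d₁ d₂ : List (Op × ℤ)) :
    pushProj (d₁ ++ d₂) = pushProj d₁ ++ pushProj d₂ := by
  simp [pushProj]

theorem pushProj_length (d : List (Op × ℤ)) :
    (pushProj d).length = countOp (d.map Prod.fst) Op.push := by
  induction d with
  | nil => rfl
  | cons p d ih =>
    obtain ⟨op, x⟩ := p
    cases op <;> simp [pushProj, countOp_cons, List.filter] at * <;> omega

theorem rtl_facts (σ : List ℤ) (hσ : σ.Nodup) (hr : 1 ≤ rtlCount σ) :
    rtlPos σ 1 < σ.length ∧
    (∀ j, j < σ.length → j ≠ rtlPos σ 1 → σ.getD (rtlPos σ 1) 0 < σ.getD j 0) := by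
  have hne : rtlPositions σ ≠ [] := by
    intro h
    simp [rtlCount, h] at hr
  obtain ⟨a, t, hl⟩ := List.exists_cons_of_ne_nil hne
  have hk₁ : rtlPos σ 1 = a := by simp [rtlPos, hl]
  have hmem : IsRTLMinPos σ a := by
    have : a ∈ rtlPositions σ := by simp [hl]
    simp only [rtlPositions, List.mem_filter, decide_eq_true_eq] at this
    exact this.2
  have halen : a < σ.length := hmem.1
  -- the least element of σ
  have hσne : σ ≠ [] := List.ne_nil_of_length_pos (Nat.lt_of_le_of_lt (Nat.zero_le _) halen)
  have hfin : σ.toFinset.Nonempty := by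
    simp [List.toFinset_nonempty_iff, hσne]
  set b := σ.toFinset.min' hfin with hbdef
  have hbmem : b ∈ σ := by
    have := σ.toFinset.min'_mem hfin
    simpa using this
  have hbmin : ∀ x ∈ σ, b ≤ x := fun x hx =>
    σ.toFinset.min'_le x (by simpa using hx)
  -- the position of the minimum
  set j₀ := σ.idxOf b with hj₀def
  have hj₀len : j₀ < σ.length := List.idxOf_lt_length_iff.mpr hbmem
  have hj₀get : σ.getD j₀ 0 = b := by
    rw [List.getD_eq_getElem _ _ hj₀len]
    exact List.getElem_idxOf hj₀len
  have hj₀rtl : IsRTLMinPos σ j₀ := by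
    refine ⟨hj₀len, fun j hj _ hlt => ?_⟩
    have : σ.getD j 0 ∈ σ := by
      rw [List.getD_eq_getElem _ _ hj]
      exact List.getElem_mem _
    exact absurd hlt (not_lt.mpr (hj₀get ▸ hbmin _ this))
  have hj₀pos : j₀ ∈ rtlPositions σ := by
    simp only [rtlPositions, List.mem_filter, List.mem_range, decide_eq_true_eq]
    exact ⟨hj₀len, hj₀rtl⟩
  -- a is the least RTL position
  have haj₀ : a ≤ j₀ := by
    have hpw : (rtlPositions σ).Pairwise (· < ·) := by
      exact List.Pairwise.filter _ (List.pairwise_lt_range (n := _))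
    rw [hl] at hpw hj₀pos
    rw [List.mem_cons] at hj₀pos
    rcases hj₀pos with h | h
    · exact le_of_eq h.symm
    · exact le_of_lt ((List.pairwise_cons.mp hpw).1 j₀ h)
  -- σ_a is the minimum value
  have hab : σ.getD a 0 ≤ b := by
    rcases Nat.lt_or_ge a j₀ with h | h
    · have := hmem.2 j₀ hj₀len h
      rw [hj₀get] at this
      exact not_lt.mp this
    · have : a = j₀ := le_antisymm haj₀ h
      rw [this, hj₀get]
  rw [hk₁]
  refine ⟨halen, fun j hj hja => ?_⟩
  have hjmem : σ.getD j 0 ∈ σ := by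
    rw [List.getD_eq_getElem _ _ hj]
    exact List.getElem_mem _
  have hle : σ.getD a 0 ≤ σ.getD j 0 := le_trans hab (hbmin _ hjmem)
  have hne2 : σ.getD a 0 ≠ σ.getD j 0 := by
    rw [List.getD_eq_getElem _ _ hj, List.getD_eq_getElem _ _ halen]
    intro heq
    exact hja ((List.Nodup.getElem_inj_iff hσ).mp heq.symm)
  exact lt_of_le_of_ne hle hne2

theorem rtlPositions_take (σ : List ℤ) (k₁ : ℕ) (hk : k₁ < σ.length)
    (hmin : ∀ j, j < σ.length → j ≠ k₁ → σ.getD k₁ 0 < σ.getD j 0) :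
    rtlPositions (σ.take (k₁ + 1)) = [k₁] := by
  have hlen : (σ.take (k₁ + 1)).length = k₁ + 1 := by
    rw [List.length_take]; omega
  have hget : ∀ j, j ≤ k₁ → (σ.take (k₁ + 1)).getD j 0 = σ.getD j 0 := by
    intro j hj
    rw [List.getD_eq_getElem _ _ (by omega), List.getD_eq_getElem _ _ (by omega)]
    simp [List.getElem_take]
  unfold rtlPositions
  rw [hlen, List.range_succ, List.filter_append]
  have part1 : (List.range k₁).filter
      (fun k => decide (IsRTLMinPos (σ.take (k₁ + 1)) k)) = [] := by
    rw [List.filter_eq_nil_iff]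
    intro k hk'
    rw [List.mem_range] at hk'
    simp only [decide_eq_true_eq]
    rintro ⟨-, hall⟩
    refine hall k₁ (by omega) hk' ?_
    rw [hget k₁ le_rfl, hget k (by omega)]
    exact hmin k (by omega) (by omega)
  have part2 : [k₁].filter
      (fun k => decide (IsRTLMinPos (σ.take (k₁ + 1)) k)) = [k₁] := by
    have hrtl : IsRTLMinPos (σ.take (k₁ + 1)) k₁ :=
      ⟨by omega, fun j hj hkj => by omega⟩
    simp [List.filter, hrtl]
  rw [part1, part2, List.nil_append]

theorem sigmaUp_one (σ : List ℤ) (hk : rtlPos σ 1 < σ.length)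
    (hmin : ∀ j, j < σ.length → j ≠ rtlPos σ 1 →
      σ.getD (rtlPos σ 1) 0 < σ.getD j 0) :
    sigmaUp σ 1 = σ.take (rtlPos σ 1) := by
  unfold sigmaUp
  rw [List.filter_eq_self]
  intro x hx
  obtain ⟨j, hj, hxj⟩ := List.getElem_of_mem hx
  rw [List.length_take] at hj
  simp only [decide_eq_true_eq]
  have hjk : j < rtlPos σ 1 := by omega
  have : x = σ.getD j 0 := by
    rw [List.getD_eq_getElem _ _ (by omega), ← hxj]
    simp [List.getElem_take]
  rw [this]
  exact hmin j (by omega) (by omega)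

end Aux

/-- The set of `P_1`-stack configurations of `σ` is exactly the set of pushall stack
configurations of `σ^{(1)}`. -/
theorem P1Config_iff_pushall (σ : List ℤ) (hσ : σ.Nodup) (hr : 1 ≤ rtlCount σ) :
    ∀ c : SConf, PiConfig σ 1 c ↔ IsPushall (sigmaUp σ 1) c := by
  obtain ⟨hk₁len0, hmin0⟩ := rtl_facts σ hσ hr
  have hrtl'0 : rtlPositions (σ.take (rtlPos σ 1 + 1)) = [rtlPos σ 1] :=
    rtlPositions_take σ _ hk₁len0 hmin0
  have hsU : sigmaUp σ 1 = σ.take (rtlPos σ 1) := sigmaUp_one σ hk₁len0 hmin0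
  intro c
  obtain ⟨cV, cH⟩ := c
  unfold PiConfig IsPushall TotalFor Reachable ReachesConf SortsTo Poppable SConf.elems initConf
  dsimp only
  rw [hsU]
  revert hk₁len0 hmin0 hrtl'0
  generalize hk₁def : rtlPos σ 1 = k₁
  generalize hmdef : σ.getD k₁ 0 = m
  generalize hσ'def : σ.take (k₁ + 1) = σ'
  intro hk₁len hmin hrtl'
  have hσ'len : σ'.length = k₁ + 1 := by
    rw [← hσ'def, List.length_take]; omega
  have hσ'nodup : σ'.Nodup := by
    rw [← hσ'def]; exact (List.take_sublist _ _).nodup hσ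
  have hσ'getD : σ'.getD k₁ 0 = m := by
    rw [← hσ'def, ← hmdef,
      List.getD_eq_getElem _ _ (by rw [List.length_take]; omega),
      List.getD_eq_getElem _ _ hk₁len]
    simp [List.getElem_take]
  have hrtlPos' : rtlPos σ' 1 = k₁ := by simp [rtlPos, hrtl']
  have hrtlCount' : rtlCount σ' = 1 := by simp [rtlCount, hrtl']
  have hmlt : ∀ x ∈ σ.take k₁, m < x := by
    intro x hx
    obtain ⟨j, hj, hxj⟩ := List.getElem_of_mem hx
    rw [List.length_take] at hj
    have hx' : x = σ.getD j 0 := by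
      rw [List.getD_eq_getElem _ _ (by omega), ← hxj]
      simp [List.getElem_take]
    rw [hx']
    exact hmin j (by omega) (by omega)
  have hmle : ∀ x ∈ σ', m ≤ x := by
    intro x hx
    rw [← hσ'def] at hx
    obtain ⟨j, hj, hxj⟩ := List.getElem_of_mem hx
    rw [List.length_take] at hj
    have hx' : x = σ.getD j 0 := by
      rw [List.getD_eq_getElem _ _ (by omega), ← hxj]
      simp [List.getElem_take]
    by_cases hjk : j = k₁
    · rw [hx', hjk, hmdef]
    · rw [hx']
      exact le_of_lt (hmin j (by omega) hjk)
  have hσ'split : σ' = σ.take k₁ ++ [m] := by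
    rw [← hσ'def, List.take_succ, List.getElem?_eq_getElem hk₁len]
    rw [← hmdef, List.getD_eq_getElem _ _ hk₁len]
    rfl
  have htklen : (σ.take k₁).length = k₁ := by rw [List.length_take]; omega
  constructor
  · -- forward direction
    rintro ⟨w, u, dw, hu, hwcount, hreach, hsorts, hdec, hP⟩
    obtain ⟨out, hrun, hsortout, hperm⟩ := hsorts
    rw [runOps_append] at hrun
    cases hmidrun : runOps w ⟨σ', [], [], []⟩ with
    | none => rw [hmidrun] at hrun; simp at hrun
    | some mid =>
    rw [hmidrun] at hrun
    simp only [Option.bind_some] at hrun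
    obtain ⟨inp, out₀, hmid2⟩ := hreach
    rw [hmidrun] at hmid2
    obtain rfl : mid = ⟨inp, cH, cV, out₀⟩ := by
      have := Option.some_inj.mp hmid2
      simpa using this
    have hmidrun' : runOps w ⟨σ', [], [], []⟩ = some ⟨inp, cH, cV, out₀⟩ := hmidrun
    have hcounts := runOps_counts hmidrun'
    have hinplen : inp.length = 1 := by
      have h1 := hcounts.1
      rw [hσ'len, hwcount] at h1
      omega
    obtain ⟨d, hdsplit, hdrun⟩ := runOps_input hmidrun'
    have hdlen : d.length = k₁ := by
      have := congrArg List.length hdsplit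
      rw [hσ'len] at this
      simp at this
      omega
    obtain ⟨hdeq, hinpeq⟩ : d = σ.take k₁ ∧ inp = [m] :=
      List.append_inj (hdsplit.symm.trans hσ'split) (by rw [hdlen, htklen])
    subst hdeq
    subst hinpeq
    -- decorated word analysis
    obtain ⟨dww, hdecw, hmapw⟩ := decorate_of_runOps hmidrun'
    have hdecfull2 : decorate (w ++ u) ⟨σ', [], [], []⟩ = some dw := hdec
    have hdec' := hdecfull2
    rw [decorate_append hmidrun' hdecw] at hdec'
    cases hdecu : decorate u ⟨[m], cH, cV, out₀⟩ with
    | none => rw [hdecu] at hdec'; simp at hdec'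
    | some dwu =>
    rw [hdecu] at hdec'
    simp only [Option.map_some, Option.some_inj] at hdec'
    have hfullrun : runOps (w ++ u) ⟨σ', [], [], []⟩ = some ⟨[], [], [], out⟩ := by
      rw [runOps_append, hmidrun']
      simpa using hrun
    have hmapu : dwu.map Prod.fst = u := by
      obtain ⟨du, hdecu2, hmapu'⟩ := decorate_of_runOps hrun
      rw [hdecu2] at hdecu
      rw [← Option.some_inj.mp hdecu]
      exact hmapu'
    have hfullcount : countOp (w ++ u) Op.push = k₁ + 1 := by
      have := (runOps_counts hfullrun).1
      rw [hσ'len] at this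
      simp at this
      omega
    have hproj : pushProj dw = σ' := by
      rw [decorate_pushProj hdecfull2, hfullcount, ← hσ'len, List.take_length]
    -- the factor given by property (P₁)
    have hP1 := hP 1 le_rfl le_rfl
    obtain ⟨⟨d1, d2, hfac⟩, -, -⟩ := hP1
    rw [hrtlPos', hσ'getD] at hfac
    have hproj2 : pushProj d1 ++ m :: pushProj d2 = σ' := by
      rw [hfac] at hproj
      rw [pushProj_append] at hproj
      have heq : pushProj ((Op.push, m) :: (Op.lam, m) :: (Op.mu, m) :: d2) =
          m :: pushProj d2 := by
        simp [pushProj, List.filter]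
      rw [heq] at hproj
      exact hproj
    have hqlt : (pushProj d1).length < σ'.length := by
      rw [← hproj2]
      simp
    have hgetq : σ'.getD (pushProj d1).length 0 = m := by
      rw [← hproj2, List.getD_eq_getElem _ _ (by simp),
        List.getElem_append_right le_rfl]
      simp
    have hq : (pushProj d1).length = k₁ := by
      have e1 : σ'[(pushProj d1).length]'hqlt = m := by
        rw [← List.getD_eq_getElem _ 0 hqlt]
        exact hgetq
      have e2 : σ'[k₁]'(by omega) = m := by
        rw [← List.getD_eq_getElem _ 0 (by omega)]
        exact hσ'getD
      exact (List.Nodup.getElem_inj_iff hσ'nodup).mp (e1.trans e2.symm)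
    have hd1count : countOp (d1.map Prod.fst) Op.push = k₁ := by
      rw [← pushProj_length, hq]
    -- identify w with the ops of d1
    obtain ⟨o, u₁, rfl⟩ : ∃ o u₁, u = o :: u₁ := by
      cases u with
      | nil => simp at hu
      | cons o u₁ => exact ⟨o, u₁, rfl⟩
    obtain rfl : o = Op.push := by simpa using hu
    have hE : w ++ Op.push :: u₁ =
        d1.map Prod.fst ++ Op.push :: Op.lam :: Op.mu :: d2.map Prod.fst := by
      have h1 : dw.map Prod.fst = w ++ Op.push :: u₁ := by
        rw [← hdec']
        simp [hmapw, hmapu]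
      have h2 : dw.map Prod.fst =
          d1.map Prod.fst ++ Op.push :: Op.lam :: Op.mu :: d2.map Prod.fst := by
        rw [hfac]
        simp
      rw [← h1, h2]
    have hkey : u₁ = Op.lam :: Op.mu :: d2.map Prod.fst := by
      rcases List.append_eq_append_iff.mp hE with ⟨t, hw', hu'⟩ | ⟨t, hw', hu'⟩
      · have hct : countOp t Op.push = 0 := by
          have := congrArg (fun l => countOp l Op.push) hw'
          simp only [countOp_append] at this
          rw [hd1count, hwcount] at this
          omega
        cases t with
        | nil =>
          simp only [List.append_nil] at hw'
          rw [← hw'] at hE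
          simpa using hE
        | cons o' t' =>
          obtain rfl : o' = Op.push := by
            have := hu'
            simp only [List.cons_append] at this
            exact (List.cons_eq_cons.mp this).1.symm
          rw [countOp_cons] at hct
          simp at hct
      · have hct : countOp t Op.push = 0 := by
          have := congrArg (fun l => countOp l Op.push) hw'
          simp only [countOp_append] at this
          rw [hd1count, hwcount] at this
          omega
        cases t with
        | nil =>
          simp only [List.append_nil] at hw'
          rw [hw'] at hE
          simpa using hE
        | cons o' t' =>
          obtain rfl : o' = Op.push := by
            have := hu'
            simp only [List.cons_append] at this
            exact (List.cons_eq_cons.mp this).1.symm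
          rw [countOp_cons] at hct
          simp at hct
    subst hkey
    -- run the word u from the intermediate configuration
    simp only [runOps, stepOp, Option.bind_some, Option.bind_eq_bind] at hrun
    obtain ⟨o₂, ho₂, hpre⟩ := runOps_output hrun
    have hout₀ : out₀ = [] := by
      cases out₀ with
      | nil => rfl
      | cons x out₀' =>
        have hxout : out = x :: (out₀' ++ m :: o₂) := by
          rw [ho₂]
          simp
        rw [hxout] at hsortout
        have hxm : x < m := (List.pairwise_cons.mp hsortout).1 m (by simp)
        have hmx : m ≤ x := hmle x (hperm.subset (by rw [hxout]; simp))
        omega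
    subst hout₀
    have hout : out = m :: o₂ := by simpa using ho₂
    rw [hout] at hsortout hperm
    have hsorto₂ : o₂.Pairwise (· < ·) := (List.pairwise_cons.mp hsortout).2
    have hrest0 : runOps (d2.map Prod.fst) ⟨[], cH, cV, []⟩ = some ⟨[], [], [], o₂⟩ := by
      simpa using hpre []
    have hnp : Op.push ∉ d2.map Prod.fst := (runOps_no_push hrun).1
    refine ⟨⟨d2.map Prod.fst, o₂, hnp, hrest0, hsorto₂⟩, ?_, ?_⟩
    · -- total
      have hpermconf := runOps_perm hmidrun'
      rw [List.perm_iff_count]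
      intro x
      have h1 := (List.perm_iff_count.mp hpermconf) x
      have h2 := congrArg (List.count x) hσ'split
      simp [List.count_append] at h1 h2 ⊢
      omega
    · -- reachable
      refine ⟨w, isStackWord_of_runOps hmidrun', [], [], ?_⟩
      have := hdrun []
      rw [List.append_nil] at this
      exact this
  · -- backward direction
    rintro ⟨hpop, htot, hreach⟩
    obtain ⟨w₀, hsw, inp, out₀, hrun₀⟩ := hreach
    have hrun₀' : runOps w₀ ⟨σ.take k₁, [], [], []⟩ = some ⟨inp, cH, cV, out₀⟩ := hrun₀
    have hpermσ := runOps_perm hrun₀'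
    have htot' : (cV ++ cH).Perm (σ.take k₁) := htot
    obtain ⟨hout₀, hinp⟩ : out₀ = [] ∧ inp = [] := by
      have h1 := hpermσ.length_eq
      have h2 := htot'.length_eq
      simp at h1 h2
      constructor
      · exact List.length_eq_zero_iff.mp (by omega)
      · exact List.length_eq_zero_iff.mp (by omega)
    subst hout₀
    subst hinp
    obtain ⟨d, hdsplit, hdrun⟩ := runOps_input hrun₀'
    obtain rfl : d = σ.take k₁ := by simpa using hdsplit.symm
    have hrunσ' : runOps w₀ ⟨σ', [], [], []⟩ = some ⟨[m], cH, cV, []⟩ := by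
      rw [hσ'split]
      exact hdrun [m]
    have hw₀count : countOp w₀ Op.push = k₁ := by
      have h1 := (runOps_counts hrun₀').1
      rw [htklen] at h1
      simp at h1
      omega
    obtain ⟨wp, rest, hnp, hrunp, hsrest⟩ := hpop
    have hrunp' : runOps wp ⟨[], cH, cV, []⟩ = some ⟨[], [], [], rest⟩ := hrunp
    have hrestperm : rest.Perm (σ.take k₁) := by
      have h1 := runOps_perm hrunp'
      simp at h1
      exact h1.trans htot'
    obtain ⟨o₂, ho₂, hpre⟩ := runOps_output hrunp'
    have ho₂' : o₂ = rest := by simpa using ho₂.symm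
    rw [ho₂'] at hpre
    have hrunwp : runOps wp ⟨[], cH, cV, [m]⟩ = some ⟨[], [], [], m :: rest⟩ := by
      simpa using hpre [m]
    have hfullrun : runOps (w₀ ++ (Op.push :: Op.lam :: Op.mu :: wp)) ⟨σ', [], [], []⟩ =
        some ⟨[], [], [], m :: rest⟩ := by
      rw [runOps_append, hrunσ']
      simp only [Option.bind_some, runOps, stepOp, Option.bind_eq_bind]
      exact hrunwp
    have hsortall : (m :: rest).Pairwise (· < ·) :=
      List.pairwise_cons.mpr ⟨fun b hb => hmlt b (hrestperm.subset hb), hsrest⟩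
    have hpermall : (m :: rest).Perm σ' := by
      rw [hσ'split]
      refine (hrestperm.cons m).trans ?_
      have := List.perm_middle (a := m) (l₁ := σ.take k₁) (l₂ := ([] : List ℤ))
      simpa using this.symm
    obtain ⟨dww, hdecw, hmapw⟩ := decorate_of_runOps hrunσ'
    obtain ⟨dp, hdecp, hmapp⟩ := decorate_of_runOps hrunwp
    have hdecu : decorate (Op.push :: Op.lam :: Op.mu :: wp) ⟨[m], cH, cV, []⟩ =
        some ((Op.push, m) :: (Op.lam, m) :: (Op.mu, m) :: dp) := by
      simp [decorate, hdecp]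
    have hdecfull : decorate (w₀ ++ (Op.push :: Op.lam :: Op.mu :: wp)) ⟨σ', [], [], []⟩ =
        some (dww ++ (Op.push, m) :: (Op.lam, m) :: (Op.mu, m) :: dp) := by
      rw [decorate_append hrunσ' hdecw, hdecu]
      rfl
    refine ⟨w₀, Op.push :: Op.lam :: Op.mu :: wp,
      dww ++ (Op.push, m) :: (Op.lam, m) :: (Op.mu, m) :: dp,
      rfl, hw₀count, ⟨[m], [], hrunσ'⟩,
      ⟨m :: rest, hfullrun, hsortall, hpermall⟩, hdecfull, ?_⟩
    intro l hl1 hl2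
    obtain rfl : l = 1 := le_antisymm hl2 hl1
    refine ⟨⟨dww, dp, ?_⟩, ?_, ?_⟩
    · rw [hrtlPos', hσ'getD]
    · intro x hx hxm
      rw [hrtlPos', hσ'getD] at hxm
      exact absurd hxm (not_lt.mpr (hmle x hx))
    · intro hcount
      rw [hrtlCount'] at hcount
      omega
end
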